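/- Let A : X → Y be a bounded linear operator with dense range between Hilbert spaces, and let Y_n ⊆ range(A) be a finite-dimensional subspace with orthogonal projection P_{Y_n}. Then the minimum-norm solution x_n of the projected equation P_{Y_n} A x = P_{Y_n} y (for exact data y = A x†, x† the minimum-norm solution) satisfies x_n = P_{A* Y_n} x†, where P_{A* Y_n} is the orthogonal projection onto the subspace A*(Y_n) ⊆ X. -/

import Mathlib

open RealInnerProductSpace

/-- Dual least squares: if `A` has dense range and `Yₙ ⊆ range A` is finite-dimensional, then the
minimum-norm solution `xₙ` of the projected equation `P_{Yₙ} A x = P_{Yₙ} y` (with exact data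
`y = A x†`, `x†` the minimum-norm solution) satisfies `xₙ = P_{A*Yₙ} x†`. -/
theorem dual_least_squares_min_norm_solution
    {X Y : Type*} [NormedAddCommGroup X] [InnerProductSpace ℝ X] [CompleteSpace X]
    [NormedAddCommGroup Y] [InnerProductSpace ℝ Y] [CompleteSpace Y]
    (A : X →L[ℝ] Y) (hrange : DenseRange A)
    (Yn : Submodule ℝ Y) [FiniteDimensional ℝ Yn] (hYn : Yn ≤ LinearMap.range (A : X →ₗ[ℝ] Y))
    (y : Y) (xdag : X) (hxdag_sol : A xdag = y)
    (hxdag_min : ∀ x : X, A x = y → ‖xdag‖ ≤ ‖x‖)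
    (xn : X)
    (hxn_sol : (Submodule.orthogonalProjectionOnto Yn (A xn) : Y) = (Submodule.orthogonalProjectionOnto Yn y : Y))
    (hxn_min : ∀ x : X,
      (Submodule.orthogonalProjectionOnto Yn (A x) : Y) = (Submodule.orthogonalProjectionOnto Yn y : Y) → ‖xn‖ ≤ ‖x‖) :
    xn = (Submodule.orthogonalProjectionOnto (Yn.map (A.adjoint : Y →ₗ[ℝ] X)) xdag : X) := by
  set K : Submodule ℝ X := Yn.map (A.adjoint : Y →ₗ[ℝ] X) with hK
  -- characterization of solutions of the projected equation
  have sol_iff : ∀ x : X,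
      ((Submodule.orthogonalProjectionOnto Yn (A x) : Y) = (Submodule.orthogonalProjectionOnto Yn y : Y)) ↔
        x - xdag ∈ Kᗮ := by
    intro x
    have h1 : ((Submodule.orthogonalProjectionOnto Yn (A x) : Y) = (Submodule.orthogonalProjectionOnto Yn y : Y)) ↔
        A x - y ∈ Ynᗮ := by
      rw [← Submodule.orthogonalProjectionOnto_eq_zero_iff (K := Yn)]
      constructor
      · intro h
        rw [map_sub, sub_eq_zero]
        exact Subtype.coe_injective h
      · intro h
        have := congrArg (Subtype.val) h
        rw [map_sub] at this
        simpa [sub_eq_zero] using this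
    rw [h1]
    constructor
    · intro h
      intro u hu
      rcases hu with ⟨v, hv, rfl⟩
      have : ⟪v, A x - y⟫ = 0 := h v hv
      calc ⟪(A.adjoint : Y →ₗ[ℝ] X) v, x - xdag⟫
          = ⟪A.adjoint v, x - xdag⟫ := rfl
        _ = ⟪v, A (x - xdag)⟫ := ContinuousLinearMap.adjoint_inner_left A _ _
        _ = ⟪v, A x - y⟫ := by rw [map_sub, hxdag_sol]
        _ = 0 := this
    · intro h v hv
      have hu : (A.adjoint : Y →ₗ[ℝ] X) v ∈ K := ⟨v, hv, rfl⟩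
      have := h _ hu
      calc ⟪v, A x - y⟫ = ⟪v, A (x - xdag)⟫ := by rw [map_sub, hxdag_sol]
        _ = ⟪A.adjoint v, x - xdag⟫ := (ContinuousLinearMap.adjoint_inner_left A _ _).symm
        _ = 0 := this
  set p : X := (Submodule.orthogonalProjectionOnto K xdag : X) with hp
  have hpK : p ∈ K := (Submodule.orthogonalProjectionOnto K xdag).2
  have hxdagp : xdag - p ∈ Kᗮ := Submodule.sub_starProjection_mem_orthogonal (K := K) xdag
  have hpsol : p - xdag ∈ Kᗮ := by simpa using Kᗮ.neg_mem hxdagp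
  have hxnK : xn - xdag ∈ Kᗮ := (sol_iff xn).1 hxn_sol
  have hxnp : xn - p ∈ Kᗮ := by
    have := Kᗮ.add_mem hxnK hxdagp
    simpa [sub_add_sub_cancel] using this
  have hle : ‖xn‖ ≤ ‖p‖ := hxn_min p ((sol_iff p).2 hpsol)
  have hinner : ⟪p, xn - p⟫ = 0 := hxnp p hpK
  have hpyth := norm_add_sq_real p (xn - p)
  rw [hinner, add_sub_cancel] at hpyth
  have h0 : ‖xn - p‖ ^ 2 ≤ 0 := by
    nlinarith [norm_nonneg xn, norm_nonneg p]
  have : ‖xn - p‖ = 0 := by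
    have := sq_nonneg ‖xn - p‖
    nlinarith
  have := norm_eq_zero.mp this
  exact sub_eq_zero.mp this
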